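/- Let N = N(Q_n, m) be a quasi Q_n-filiform Lie algebra. Then {e_{10}, e_{11}, e_{20}, e_{21}, ..., e_{m0}, e_{m1}} is a minimal system of generators of N. -/

import Mathlib

open Finset
structure QuasiQnFiliform (n m r : ℕ) (N : Type*) [LieRing N] [LieAlgebra ℂ N] : Type _ where
  /-- the distinguished vectors `e_{ij}`, for `1 ≤ i ≤ m`, `0 ≤ j ≤ n` -/
  e : ℕ → ℕ → N
  /-- `N` is nilpotent -/
  nilpotent : LieRing.IsNilpotent N
  /-- `N` is finite-dimensional -/
  findim : FiniteDimensional ℂ N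
  /-- `[e_{i0}, e_{ij}] = e_{i,j+1}` for `1 ≤ j ≤ n - 2` -/
  bracket_e0 : ∀ i j, 1 ≤ i → i ≤ m → 1 ≤ j → j ≤ n - 2 → ⁅e i 0, e i j⁆ = e i (j + 1)
  /-- `[e_{i0}, e_{i,n-1}] = 0` -/
  bracket_e0_top : ∀ i, 1 ≤ i → i ≤ m → ⁅e i 0, e i (n - 1)⁆ = 0
  /-- `[e_{i0}, e_{in}] = 0` -/
  bracket_e0_n : ∀ i, 1 ≤ i → i ≤ m → ⁅e i 0, e i n⁆ = 0
  /-- `[e_{ij}, e_{i,n-j}] = (-1)^j e_{in}` for `1 ≤ j ≤ n - 1` -/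
  bracket_pair : ∀ i j, 1 ≤ i → i ≤ m → 1 ≤ j → j ≤ n - 1 →
    ⁅e i j, e i (n - j)⁆ = ((-1 : ℂ)) ^ j • e i n
  /-- all remaining brackets inside a component vanish -/
  bracket_zero : ∀ i j k, 1 ≤ i → i ≤ m → 1 ≤ j → j ≤ n → 1 ≤ k → k ≤ n → j + k ≠ n →
    ⁅e i j, e i k⁆ = 0
  /-- distinct components commute: `[N_i, N_{i'}] = 0` -/
  bracket_comm : ∀ i i' j j', 1 ≤ i → i ≤ m → 1 ≤ i' → i' ≤ m → i ≠ i' → j ≤ n → j' ≤ n →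
    ⁅e i j, e i' j'⁆ = 0
  /-- `{e_{i0}, …, e_{in}}` is linearly independent (each `Nᵢ ≅ Qₙ` has it as a basis) -/
  indep_comp : ∀ i, 1 ≤ i → i ≤ m → LinearIndependent ℂ (fun j : Fin (n + 1) => e i (j : ℕ))
  /-- the distinguished family is linearly independent … -/
  basis_indep : LinearIndependent ℂ
    (Sum.elim (fun p : Fin m × Fin n => e ((p.1 : ℕ) + 1) (p.2 : ℕ))
      (fun t : Fin r => e ((t : ℕ) + 1) n))
  /-- … and spans `N`, i.e. it is a basis of `N` (in particular `N = N₁ + ⋯ + N_m`) -/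
  basis_span : Submodule.span ℂ (Set.range
    (Sum.elim (fun p : Fin m × Fin n => e ((p.1 : ℕ) + 1) (p.2 : ℕ))
      (fun t : Fin r => e ((t : ℕ) + 1) n))) = ⊤
  /-- `r = dim c^{n-1} N` -/
  rank_lcs : Module.finrank ℂ (LieModule.lowerCentralSeries ℂ N N (n - 1)) = r

theorem quasiQnFiliform_minimal_generators
    (n d m r : ℕ) (hn : n = 2 * d + 1) (hd : 2 ≤ d)
    (hm : 1 ≤ m) (hr : 1 ≤ r) (hrm : r ≤ m)
    (N : Type*) [LieRing N] [LieAlgebra ℂ N] (Q : QuasiQnFiliform n m r N)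
    (S : Set N) (hS : S = {v | ∃ i, 1 ≤ i ∧ i ≤ m ∧ (v = Q.e i 0 ∨ v = Q.e i 1)}) :
    LieSubalgebra.lieSpan ℂ N S = ⊤ ∧
      ∀ s : Set N, s ⊂ S → LieSubalgebra.lieSpan ℂ N s ≠ ⊤ := by
  classical
  haveI : FiniteDimensional ℂ N := Q.findim
  subst hS
  obtain ⟨e, -, -, bracket_e0, bracket_e0_top, bracket_e0_n, bracket_pair, bracket_zero,
    bracket_comm, -, basis_indep, basis_span, rank_lcs⟩ := Q
  set S : Set N := {v | ∃ i, 1 ≤ i ∧ i ≤ m ∧ (v = e i 0 ∨ v = e i 1)} with hSdef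
  set Bf : (Fin m × Fin n) ⊕ Fin r → N :=
    Sum.elim (fun p : Fin m × Fin n => e ((p.1 : ℕ) + 1) (p.2 : ℕ))
      (fun t : Fin r => e ((t : ℕ) + 1) n) with hBf
  have hn5 : 5 ≤ n := by omega
  -- membership of generators in S
  have hS0 : ∀ i, 1 ≤ i → i ≤ m → e i 0 ∈ S := fun i h1 h2 => ⟨i, h1, h2, Or.inl rfl⟩
  have hS1 : ∀ i, 1 ≤ i → i ≤ m → e i 1 ∈ S := fun i h1 h2 => ⟨i, h1, h2, Or.inr rfl⟩
  -- Part 1: all e i j, 1 ≤ j ≤ n-1, lie in the lieSpan of S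
  have hlow : ∀ i, 1 ≤ i → i ≤ m → ∀ j, 1 ≤ j → j ≤ n - 1 →
      e i j ∈ LieSubalgebra.lieSpan ℂ N S := by
    intro i h1 h2 j
    induction j with
    | zero => intro h; omega
    | succ k ih =>
      intro _ hk
      rcases Nat.eq_zero_or_pos k with h0 | hpos
      · subst h0
        exact LieSubalgebra.subset_lieSpan (hS1 i h1 h2)
      · have hb : e i (k + 1) = ⁅e i 0, e i k⁆ := (bracket_e0 i k h1 h2 hpos (by omega)).symm
        rw [hb]
        exact LieSubalgebra.lie_mem _ (LieSubalgebra.subset_lieSpan (hS0 i h1 h2))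
          (ih hpos (by omega))
  have htop : ∀ i, 1 ≤ i → i ≤ m → e i n ∈ LieSubalgebra.lieSpan ℂ N S := by
    intro i h1 h2
    have hb := bracket_pair i 1 h1 h2 le_rfl (by omega)
    have hv : e i n = -⁅e i 1, e i (n - 1)⁆ := by
      rw [hb]; simp
    rw [hv]
    exact neg_mem (LieSubalgebra.lie_mem _ (LieSubalgebra.subset_lieSpan (hS1 i h1 h2))
      (hlow i h1 h2 (n - 1) (by omega) le_rfl))
  have hgen : LieSubalgebra.lieSpan ℂ N S = ⊤ := by
    have hrange : Set.range Bf ⊆ (LieSubalgebra.lieSpan ℂ N S : Set N) := by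
      rintro _ ⟨(⟨a, j⟩ | t), rfl⟩
      · simp only [hBf, Sum.elim_inl]
        rcases Nat.eq_zero_or_pos (j : ℕ) with h0 | hpos
        · rw [h0]
          exact LieSubalgebra.subset_lieSpan (hS0 _ (by omega) (by omega))
        · exact hlow _ (by omega) (by omega) _ hpos (by omega)
      · simp only [hBf, Sum.elim_inr]
        exact htop _ (by omega) (by omega)
    have hle : Submodule.span ℂ (Set.range Bf) ≤ (LieSubalgebra.lieSpan ℂ N S).toSubmodule :=
      Submodule.span_le.mpr hrange
    rw [basis_span] at hle
    rw [eq_top_iff]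
    intro x _
    exact hle Submodule.mem_top
  refine ⟨hgen, ?_⟩
  -- Part 2: minimality
  intro s hs
  obtain ⟨v, hvS, hvs⟩ := Set.exists_of_ssubset hs
  obtain ⟨i, hi1, hi2, hv⟩ := hvS
  obtain ⟨jv, hjv1, hjv⟩ : ∃ jv ≤ 1, v = e i jv := by
    rcases hv with h | h
    exacts [⟨0, by omega, h⟩, ⟨1, by omega, h⟩]
  set idx : (Fin m × Fin n) ⊕ Fin r :=
    Sum.inl (⟨i - 1, by omega⟩, ⟨jv, by omega⟩) with hidx
  set K : Submodule ℂ N := Submodule.span ℂ (Bf '' {idx}ᶜ) with hK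
  have hBidx : Bf idx = v := by
    simp only [hBf, hidx, Sum.elim_inl]
    rw [hjv]
    congr 1
    omega
  have hmemK : ∀ p, p ≠ idx → Bf p ∈ K := fun p hp =>
    Submodule.subset_span ⟨p, hp, rfl⟩
  -- lower central series facts
  have hlcs : ∀ a, 1 ≤ a → a ≤ m → ∀ j, 1 ≤ j → j ≤ n - 1 →
      e a j ∈ LieModule.lowerCentralSeries ℂ N N (j - 1) := by
    intro a h1 h2 j
    induction j with
    | zero => intro h; omega
    | succ k ih =>
      intro _ hk
      rcases Nat.eq_zero_or_pos k with h0 | hpos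
      · subst h0
        simp only [Nat.sub_self, LieModule.lowerCentralSeries_zero]
        exact LieSubmodule.mem_top _
      · have hb : e a (k + 1) = ⁅e a 0, e a k⁆ := (bracket_e0 a k h1 h2 hpos (by omega)).symm
        have hk' : e a k ∈ LieModule.lowerCentralSeries ℂ N N (k - 1) := ih hpos (by omega)
        have hmem : ⁅e a 0, e a k⁆ ∈ LieModule.lowerCentralSeries ℂ N N ((k - 1) + 1) := by
          rw [LieModule.lowerCentralSeries_succ]
          exact LieSubmodule.lie_mem_lie (LieSubmodule.mem_top _) hk'
        rw [hb, show (k + 1) - 1 = (k - 1) + 1 from by omega]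
        exact hmem
  have hlcsn : ∀ a, 1 ≤ a → a ≤ m →
      e a n ∈ LieModule.lowerCentralSeries ℂ N N (n - 1) := by
    intro a h1 h2
    have hb := bracket_pair a 1 h1 h2 le_rfl (by omega)
    have hv' : e a n = -⁅e a 1, e a (n - 1)⁆ := by rw [hb]; simp
    have hmem : ⁅e a 1, e a (n - 1)⁆ ∈ LieModule.lowerCentralSeries ℂ N N ((n - 2) + 1) := by
      rw [LieModule.lowerCentralSeries_succ]
      exact LieSubmodule.lie_mem_lie (LieSubmodule.mem_top _)
        (by simpa [show n - 1 - 1 = n - 2 from by omega] using hlcs a h1 h2 (n - 1) (by omega) le_rfl)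
    rw [show (n - 2) + 1 = n - 1 from by omega] at hmem
    rw [hv']
    exact neg_mem hmem
  -- the span of the e a n for a ≤ r equals c^{n-1} N
  set G : Fin r → N := fun t : Fin r => e ((t : ℕ) + 1) n with hG
  set W : Submodule ℂ N := Submodule.span ℂ (Set.range G) with hW
  have hGindep : LinearIndependent ℂ G := by
    have := basis_indep.comp Sum.inr Sum.inr_injective
    exact this
  have hWC : W ≤ (LieModule.lowerCentralSeries ℂ N N (n - 1) : LieSubmodule ℂ N N).toSubmodule := by
    rw [hW, Submodule.span_le]
    rintro _ ⟨t, rfl⟩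
    exact hlcsn _ (by omega) (by omega)
  have hWeq : W = (LieModule.lowerCentralSeries ℂ N N (n - 1) : LieSubmodule ℂ N N).toSubmodule := by
    apply Submodule.eq_of_le_of_finrank_le hWC
    have h1 : Module.finrank ℂ W = r := by
      rw [hW, finrank_span_eq_card hGindep, Fintype.card_fin]
    rw [h1]
    exact rank_lcs.le
  have henW : ∀ a, 1 ≤ a → a ≤ m → e a n ∈ W := by
    intro a h1 h2
    rw [hWeq]
    exact hlcsn a h1 h2
  have hWK : W ≤ K := by
    rw [hW, Submodule.span_le]
    rintro _ ⟨t, rfl⟩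
    exact hmemK (Sum.inr t) (by simp [hidx])
  have henK : ∀ a, 1 ≤ a → a ≤ m → e a n ∈ K := fun a h1 h2 => hWK (henW a h1 h2)
  -- membership of basis vectors e a jj (jj ≠ jv or a ≠ i) in K
  have hEK : ∀ a jj, 1 ≤ a → a ≤ m → jj < n → ¬(a = i ∧ jj = jv) → e a jj ∈ K := by
    intro a jj h1 h2 h3 h4
    have hval : e a jj = Bf (Sum.inl (⟨a - 1, by omega⟩, ⟨jj, h3⟩)) := by
      simp only [hBf, Sum.elim_inl]
      congr 1
      omega
    rw [hval]
    apply hmemK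
    intro hcon
    apply h4
    rw [hidx] at hcon
    simp only [Sum.inl.injEq, Prod.mk.injEq, Fin.mk.injEq] at hcon
    exact ⟨by omega, hcon.2⟩
  have hK2 : ∀ a jj, 1 ≤ a → a ≤ m → 2 ≤ jj → jj ≤ n - 1 → e a jj ∈ K := by
    intro a jj h1 h2 h3 h4
    exact hEK a jj h1 h2 (by omega) (by omega)
  -- brackets of basis vectors lie in K
  have hbK : ∀ p q, ⁅Bf p, Bf q⁆ ∈ K := by
    have inlinl : ∀ (a : Fin m) (j k : Fin n), ⁅e ((a : ℕ) + 1) (j : ℕ), e ((a : ℕ) + 1) (k : ℕ)⁆ ∈ K := by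
      intro a j k
      rcases Nat.eq_zero_or_pos (j : ℕ) with hj0 | hjpos
      · rcases Nat.eq_zero_or_pos (k : ℕ) with hk0 | hkpos
        · rw [hj0, hk0, lie_self]; exact zero_mem K
        · rw [hj0]
          rcases Nat.lt_or_ge (k : ℕ) (n - 1) with hklt | hkge
          · rw [bracket_e0 _ _ (by omega) (by omega) hkpos (by omega)]
            exact hK2 _ _ (by omega) (by omega) (by omega) (by omega)
          · have hkeq : (k : ℕ) = n - 1 := by omega
            rw [hkeq, bracket_e0_top _ (by omega) (by omega)]
            exact zero_mem K
      · rcases Nat.eq_zero_or_pos (k : ℕ) with hk0 | hkpos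
        · rw [hk0, ← lie_skew]
          apply neg_mem
          rcases Nat.lt_or_ge (j : ℕ) (n - 1) with hjlt | hjge
          · rw [bracket_e0 _ _ (by omega) (by omega) hjpos (by omega)]
            exact hK2 _ _ (by omega) (by omega) (by omega) (by omega)
          · have hjeq : (j : ℕ) = n - 1 := by omega
            rw [hjeq, bracket_e0_top _ (by omega) (by omega)]
            exact zero_mem K
        · by_cases hsum : (j : ℕ) + (k : ℕ) = n
          · have hkk : (k : ℕ) = n - (j : ℕ) := by omega
            rw [hkk, bracket_pair _ _ (by omega) (by omega) hjpos (by omega)]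
            exact Submodule.smul_mem K _ (henK _ (by omega) (by omega))
          · rw [bracket_zero _ _ _ (by omega) (by omega) hjpos (by omega) hkpos (by omega) hsum]
            exact zero_mem K
    have inlinr : ∀ (a : Fin m) (j : Fin n) (t : Fin r),
        ⁅e ((a : ℕ) + 1) (j : ℕ), e ((t : ℕ) + 1) n⁆ ∈ K := by
      intro a j t
      by_cases hat : (a : ℕ) = (t : ℕ)
      · rw [hat]
        rcases Nat.eq_zero_or_pos (j : ℕ) with hj0 | hjpos
        · rw [hj0, bracket_e0_n _ (by omega) (by omega)]; exact zero_mem K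
        · rw [bracket_zero _ _ _ (by omega) (by omega) hjpos (by omega) (by omega) le_rfl
            (by omega)]
          exact zero_mem K
      · rw [bracket_comm _ _ _ _ (by omega) (by omega) (by omega) (by omega) (by omega)
          (by omega) le_rfl]
        exact zero_mem K
    rintro (⟨a, j⟩ | t) (⟨b, k⟩ | t')
    · simp only [hBf, Sum.elim_inl]
      by_cases hab : (a : ℕ) = (b : ℕ)
      · rw [← hab]; exact inlinl a j k
      · rw [bracket_comm _ _ _ _ (by omega) (by omega) (by omega) (by omega) (by omega)
          (by omega) (by omega)]
        exact zero_mem K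
    · simp only [hBf, hG, Sum.elim_inl, Sum.elim_inr]
      exact inlinr a j t'
    · simp only [hBf, hG, Sum.elim_inl, Sum.elim_inr]
      rw [← lie_skew]
      exact neg_mem (inlinr b k t)
    · simp only [hBf, hG, Sum.elim_inr]
      by_cases htt : (t : ℕ) = (t' : ℕ)
      · rw [show (t : ℕ) + 1 = (t' : ℕ) + 1 from by omega, lie_self]; exact zero_mem K
      · rw [bracket_comm _ _ _ _ (by omega) (by omega) (by omega) (by omega) (by omega)
          le_rfl le_rfl]
        exact zero_mem K
  -- K is closed under all brackets
  have hKlie : ∀ x y : N, ⁅x, y⁆ ∈ K := by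
    have hxspan : ∀ x : N, x ∈ Submodule.span ℂ (Set.range Bf) := by
      rw [basis_span]; exact fun x => trivial
    intro x y
    induction hxspan x using Submodule.span_induction generalizing y with
    | mem z hz =>
      obtain ⟨p, rfl⟩ := hz
      induction hxspan y using Submodule.span_induction with
      | mem w hw =>
        obtain ⟨q, rfl⟩ := hw
        exact hbK p q
      | zero => rw [lie_zero]; exact zero_mem K
      | add u w _ _ hu hw => rw [lie_add]; exact add_mem hu hw
      | smul c u _ hu => rw [lie_smul]; exact Submodule.smul_mem K c hu
    | zero => rw [zero_lie]; exact zero_mem K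
    | add u w _ _ hu hw => rw [add_lie]; exact add_mem (hu y) (hw y)
    | smul c u _ hu => rw [smul_lie]; exact Submodule.smul_mem K c (hu y)
  set K' : LieSubalgebra ℂ N := { K with lie_mem' := fun {x y} _ _ => hKlie x y } with hK'
  have hsK : s ⊆ (K' : Set N) := by
    intro w hw
    have hwS : w ∈ S := hs.1 hw
    obtain ⟨i', h1, h2, hw'⟩ := hwS
    have hwv : w ≠ v := fun h => hvs (h ▸ hw)
    obtain ⟨jw, hjw1, hjweq⟩ : ∃ jw ≤ 1, w = e i' jw := by
      rcases hw' with h | h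
      exacts [⟨0, by omega, h⟩, ⟨1, by omega, h⟩]
    have : e i' jw ∈ K := by
      apply hEK i' jw h1 h2 (by omega)
      rintro ⟨rfl, rfl⟩
      exact hwv (by rw [hjweq, ← hjv])
    rw [hjweq]
    exact this
  intro hcon
  have hvmem : v ∈ LieSubalgebra.lieSpan ℂ N s := by rw [hcon]; trivial
  have hle : LieSubalgebra.lieSpan ℂ N s ≤ K' := (LieSubalgebra.lieSpan_le).mpr hsK
  have hvK : v ∈ K := hle hvmem
  have : Bf idx ∉ Submodule.span ℂ (Bf '' {idx}ᶜ) :=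
    basis_indep.notMem_span_image (by simp)
  rw [hBidx] at this
  exact this hvK
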